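/- The map (k,m) ↦ (p,q), where p = (S + sinh m)/(cosh m + S), q = (S − sinh m)/(cosh m + S) and S = sqrt(sinh²m + k²), is a bijection from (0,∞) × ℝ onto (0,1) × (0,1), with inverse given by k = sqrt(pq/((1−p)(1−q))) and m = (1/2)·log((1−q)/(1−p)). -/

import Mathlib

/-- Transition probability `p = (S + sinh m)/(cosh m + S)` with `S = sqrt(sinh² m + k²)`. -/
noncomputable def pIsing (k m : ℝ) : ℝ :=
  (Real.sqrt (Real.sinh m ^ 2 + k ^ 2) + Real.sinh m) /
    (Real.cosh m + Real.sqrt (Real.sinh m ^ 2 + k ^ 2))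

/-- Transition probability `q = (S − sinh m)/(cosh m + S)` with `S = sqrt(sinh² m + k²)`. -/
noncomputable def qIsing (k m : ℝ) : ℝ :=
  (Real.sqrt (Real.sinh m ^ 2 + k ^ 2) - Real.sinh m) /
    (Real.cosh m + Real.sqrt (Real.sinh m ^ 2 + k ^ 2))

/-- **Markov–Gibbs correspondence as a bijection.**  The map `(k,m) ↦ (p,q)` is a
bijection from `(0,∞) × ℝ` onto `(0,1) × (0,1)`, with inverse
`(p,q) ↦ (sqrt(pq/((1−p)(1−q))), (1/2) log((1−q)/(1−p)))`. -/
lemma ising_basic (k m : ℝ) (hk : 0 < k) :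
    pIsing k m ∈ Set.Ioo (0:ℝ) 1 ∧ qIsing k m ∈ Set.Ioo (0:ℝ) 1 ∧
    pIsing k m * qIsing k m / ((1 - pIsing k m) * (1 - qIsing k m)) = k ^ 2 ∧
    (1 - qIsing k m) / (1 - pIsing k m) = Real.exp (2 * m) := by
  set S := Real.sqrt (Real.sinh m ^ 2 + k ^ 2) with hSdef
  have hS2 : S ^ 2 = Real.sinh m ^ 2 + k ^ 2 := Real.sq_sqrt (by positivity)
  have hS0 : 0 ≤ S := Real.sqrt_nonneg _
  have h1 : Real.sinh m < S := by
    nlinarith [sq_nonneg (S - Real.sinh m), sq_nonneg (S + Real.sinh m)]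
  have h2 : -S < Real.sinh m := by
    nlinarith [sq_nonneg (S - Real.sinh m), sq_nonneg (S + Real.sinh m)]
  have hc : 0 < Real.cosh m := Real.cosh_pos m
  have hcs : Real.sinh m < Real.cosh m := Real.sinh_lt_cosh m
  have hcs2 : -Real.cosh m < Real.sinh m := by
    have := Real.sinh_lt_cosh (-m); simp at this; linarith
  have hd : 0 < Real.cosh m + S := by linarith
  have hp : pIsing k m ∈ Set.Ioo (0:ℝ) 1 := by
    constructor
    · exact div_pos (by linarith) hd
    · rw [pIsing, div_lt_one hd]; linarith
  have hq : qIsing k m ∈ Set.Ioo (0:ℝ) 1 := by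
    constructor
    · exact div_pos (by linarith) hd
    · rw [qIsing, div_lt_one hd]; linarith
  have hp1 : 1 - pIsing k m = (Real.cosh m - Real.sinh m) / (Real.cosh m + S) := by
    rw [pIsing]; field_simp; rw [← hSdef]; ring
  have hq1 : 1 - qIsing k m = (Real.cosh m + Real.sinh m) / (Real.cosh m + S) := by
    rw [qIsing]; field_simp; rw [← hSdef]; ring
  have hch : Real.cosh m ^ 2 - Real.sinh m ^ 2 = 1 := Real.cosh_sq_sub_sinh_sq m
  refine ⟨hp, hq, ?_, ?_⟩
  · rw [hp1, hq1, pIsing, qIsing, ← hSdef]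
    have hA : Real.cosh m - Real.sinh m ≠ 0 := by linarith
    have hB : Real.cosh m + Real.sinh m ≠ 0 := by linarith
    have hexp : Real.exp (-m) * Real.exp m = 1 := by rw [← Real.exp_add]; simp
    field_simp
    nlinarith [hS2, hexp]
  · rw [hp1, hq1, Real.cosh_add_sinh, Real.cosh_sub_sinh]
    rw [div_div_div_eq, mul_comm]
    rw [mul_div_mul_left _ _ hd.ne', ← Real.exp_sub]
    ring_nf

lemma ising_inv (p q : ℝ) (hp : p ∈ Set.Ioo (0:ℝ) 1) (hq : q ∈ Set.Ioo (0:ℝ) 1) :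
    0 < Real.sqrt (p * q / ((1 - p) * (1 - q))) ∧
    pIsing (Real.sqrt (p * q / ((1 - p) * (1 - q)))) ((1/2) * Real.log ((1 - q) / (1 - p))) = p ∧
    qIsing (Real.sqrt (p * q / ((1 - p) * (1 - q)))) ((1/2) * Real.log ((1 - q) / (1 - p))) = q := by
  obtain ⟨hp0, hp1⟩ := hp
  obtain ⟨hq0, hq1⟩ := hq
  set k := Real.sqrt (p * q / ((1 - p) * (1 - q))) with hkdef
  set m := (1/2) * Real.log ((1 - q) / (1 - p)) with hmdef
  have ha : (0:ℝ) < 1 - p := by linarith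
  have hb : (0:ℝ) < 1 - q := by linarith
  set u := Real.sqrt (1 - p) with hudef
  set v := Real.sqrt (1 - q) with hvdef
  have hu : u ^ 2 = 1 - p := Real.sq_sqrt ha.le
  have hv : v ^ 2 = 1 - q := Real.sq_sqrt hb.le
  have hu0 : 0 < u := Real.sqrt_pos.mpr ha
  have hv0 : 0 < v := Real.sqrt_pos.mpr hb
  have hk0 : 0 < k := Real.sqrt_pos.mpr (by positivity)
  have hk2 : k ^ 2 = p * q / (u ^ 2 * v ^ 2) := by
    rw [hkdef, Real.sq_sqrt (by positivity), hu, hv]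
  set E := Real.exp m with hEdef
  have hE0 : 0 < E := Real.exp_pos m
  have hE2 : E ^ 2 = (1 - q) / (1 - p) := by
    rw [hEdef, sq, ← Real.exp_add, hmdef]
    rw [show (1/2) * Real.log ((1-q)/(1-p)) + (1/2) * Real.log ((1-q)/(1-p))
        = Real.log ((1-q)/(1-p)) by ring]
    exact Real.exp_log (by positivity)
  have hEv : E = v / u := by
    have h1 : E ^ 2 = (v / u) ^ 2 := by
      rw [hE2, div_pow, hu, hv]
    have h2 : Real.sqrt (E ^ 2) = Real.sqrt ((v / u) ^ 2) := by rw [h1]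
    rwa [Real.sqrt_sq hE0.le, Real.sqrt_sq (by positivity)] at h2
  have hsinh : Real.sinh m = (p - q) / (2 * (u * v)) := by
    rw [Real.sinh_eq, Real.exp_neg, ← hEdef, hEv]
    rw [div_eq_div_iff (by norm_num) (by positivity)]
    field_simp
    linear_combination hv - hu
  have hcosh : Real.cosh m = (2 - p - q) / (2 * (u * v)) := by
    rw [Real.cosh_eq, Real.exp_neg, ← hEdef, hEv]
    rw [div_eq_div_iff (by norm_num) (by positivity)]
    field_simp
    linear_combination hv + hu
  have hSS : Real.sinh m ^ 2 + k ^ 2 = ((p + q) / (2 * (u * v))) ^ 2 := by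
    rw [hsinh, hk2]
    field_simp
    ring
  have hS : Real.sqrt (Real.sinh m ^ 2 + k ^ 2) = (p + q) / (2 * (u * v)) := by
    rw [hSS, Real.sqrt_sq (by positivity)]
  have hden : (2 - p - q) / (2 * (u * v)) + (p + q) / (2 * (u * v)) ≠ 0 := by
    rw [← add_div]
    exact ne_of_gt (div_pos (by linarith) (by positivity))
  refine ⟨hk0, ?_, ?_⟩
  · rw [pIsing, hS, hsinh, hcosh]
    rw [div_eq_iff hden]
    field_simp
    ring
  · rw [qIsing, hS, hsinh, hcosh]
    rw [div_eq_iff hden]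
    field_simp
    ring

theorem ising_markov_bijection :
    Set.BijOn (fun km : ℝ × ℝ => (pIsing km.1 km.2, qIsing km.1 km.2))
      (Set.Ioi 0 ×ˢ Set.univ) (Set.Ioo 0 1 ×ˢ Set.Ioo 0 1) ∧
    Set.InvOn
      (fun pq : ℝ × ℝ =>
        (Real.sqrt (pq.1 * pq.2 / ((1 - pq.1) * (1 - pq.2))),
         (1 / 2) * Real.log ((1 - pq.2) / (1 - pq.1))))
      (fun km : ℝ × ℝ => (pIsing km.1 km.2, qIsing km.1 km.2))
      (Set.Ioi 0 ×ˢ Set.univ) (Set.Ioo 0 1 ×ˢ Set.Ioo 0 1) := by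
  have hmf : Set.MapsTo (fun km : ℝ × ℝ => (pIsing km.1 km.2, qIsing km.1 km.2))
      (Set.Ioi 0 ×ˢ Set.univ) (Set.Ioo 0 1 ×ˢ Set.Ioo 0 1) := by
    rintro ⟨k, m⟩ ⟨hk, -⟩
    obtain ⟨h1, h2, -, -⟩ := ising_basic k m hk
    exact ⟨h1, h2⟩
  have hmg : Set.MapsTo (fun pq : ℝ × ℝ =>
      (Real.sqrt (pq.1 * pq.2 / ((1 - pq.1) * (1 - pq.2))),
       (1 / 2) * Real.log ((1 - pq.2) / (1 - pq.1))))
      (Set.Ioo 0 1 ×ˢ Set.Ioo 0 1) (Set.Ioi 0 ×ˢ Set.univ) := by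
    rintro ⟨p, q⟩ ⟨hp, hq⟩
    exact ⟨(ising_inv p q hp hq).1, trivial⟩
  have hleft : Set.LeftInvOn
      (fun pq : ℝ × ℝ =>
        (Real.sqrt (pq.1 * pq.2 / ((1 - pq.1) * (1 - pq.2))),
         (1 / 2) * Real.log ((1 - pq.2) / (1 - pq.1))))
      (fun km : ℝ × ℝ => (pIsing km.1 km.2, qIsing km.1 km.2))
      (Set.Ioi 0 ×ˢ Set.univ) := by
    rintro ⟨k, m⟩ ⟨hk, -⟩
    obtain ⟨-, -, h3, h4⟩ := ising_basic k m hk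
    simp only
    refine Prod.ext ?_ ?_
    · show Real.sqrt _ = k
      rw [h3, Real.sqrt_sq (le_of_lt hk)]
    · show (1/2 : ℝ) * Real.log _ = m
      rw [h4, Real.log_exp]
      ring
  have hright : Set.RightInvOn
      (fun pq : ℝ × ℝ =>
        (Real.sqrt (pq.1 * pq.2 / ((1 - pq.1) * (1 - pq.2))),
         (1 / 2) * Real.log ((1 - pq.2) / (1 - pq.1))))
      (fun km : ℝ × ℝ => (pIsing km.1 km.2, qIsing km.1 km.2))
      (Set.Ioo 0 1 ×ˢ Set.Ioo 0 1) := by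
    rintro ⟨p, q⟩ ⟨hp, hq⟩
    obtain ⟨-, h1, h2⟩ := ising_inv p q hp hq
    exact Prod.ext h1 h2
  exact ⟨Set.InvOn.bijOn ⟨hleft, hright⟩ hmf hmg, ⟨hleft, hright⟩⟩
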